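/- Let K and D be positive integers and C_X, C' ≥ 0. Let a_1, …, a_K ∈ ℝ satisfy Σ_{k=1}^K a_k² ≤ 2 C_X / K, let m_1, …, m_K ∈ ℝ satisfy Σ_{k=1}^K m_k² ≤ C', and let s_1², …, s_K² ≥ 0. Then | Σ_{k=1}^K a_k · erf( m_k / √(1 + 2 s_k²) ) | ≤ (2 C_X)^{1/2} · (1 − exp(−(4/π) C' / K))^{1/2}. In particular, if C_X and C' are fixed as K → ∞, this bound tends to 0. -/

import Mathlib

/-- The Gauss error function `erf(z) = ∫_0^z (2/√π) exp(-t²) dt`. -/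
noncomputable def erf (z : ℝ) : ℝ :=
  ∫ t in (0 : ℝ)..z, 2 / Real.sqrt Real.pi * Real.exp (-t ^ 2)


open MeasureTheory Set Metric

noncomputable def Qfun (x : ℝ) : ℝ :=
  ∫ t in (0 : ℝ)..1, Real.exp (-(x ^ 2 * (1 + t ^ 2))) / (1 + t ^ 2)

lemma erf_zero : erf 0 = 0 := by simp [erf]

lemma erf_hasDerivAt (x : ℝ) :
    HasDerivAt erf (2 / Real.sqrt Real.pi * Real.exp (-x ^ 2)) x := by
  have hc : Continuous fun t : ℝ => 2 / Real.sqrt Real.pi * Real.exp (-t ^ 2) := by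
    continuity
  exact intervalIntegral.integral_hasDerivAt_right (hc.intervalIntegrable 0 x)
    (hc.stronglyMeasurableAtFilter _ _) hc.continuousAt

lemma int_aux (x : ℝ) :
    x * ∫ t in (0:ℝ)..1, Real.exp (-(x * t) ^ 2) = Real.sqrt Real.pi / 2 * erf x := by
  have hπ : Real.sqrt Real.pi ≠ 0 := by
    positivity
  have herf : erf x = 2 / Real.sqrt Real.pi * ∫ t in (0:ℝ)..x, Real.exp (-t ^ 2) := by
    rw [erf, intervalIntegral.integral_const_mul]
  rcases eq_or_ne x 0 with rfl | hx
  · simp [erf_zero]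
  · rw [intervalIntegral.integral_comp_mul_left (fun s => Real.exp (-s ^ 2)) hx]
    rw [herf]
    simp only [mul_zero, mul_one, smul_eq_mul]
    field_simp

lemma Q_hasDerivAt (x : ℝ) :
    HasDerivAt Qfun (-(Real.sqrt Real.pi) * Real.exp (-x ^ 2) * erf x) x := by
  set F : ℝ → ℝ → ℝ := fun x t => Real.exp (-(x ^ 2 * (1 + t ^ 2))) / (1 + t ^ 2) with hF
  set F' : ℝ → ℝ → ℝ := fun x t => -(2 * x) * Real.exp (-(x ^ 2 * (1 + t ^ 2))) with hF'
  have hden : ∀ t : ℝ, (0:ℝ) < 1 + t ^ 2 := fun t => by positivity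
  have hFc : ∀ y : ℝ, Continuous (F y) := by
    intro y
    apply Continuous.div (by continuity) (by continuity)
    intro t; exact (hden t).ne'
  have hF'c : Continuous (F' x) := by continuity
  have key : HasDerivAt (fun y => ∫ t in (0:ℝ)..1, F y t) (∫ t in (0:ℝ)..1, F' x t) x := by
    refine (intervalIntegral.hasDerivAt_integral_of_dominated_loc_of_deriv_le (s := ball x 1) (ball_mem_nhds x one_pos)
      (bound := fun _ => 2 * (|x| + 1)) ?_ ?_ ?_ ?_ ?_ ?_).2
    · exact Filter.Eventually.of_forall fun y => (hFc y).aestronglyMeasurable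
    · exact (hFc x).intervalIntegrable _ _
    · exact hF'c.aestronglyMeasurable
    · refine Filter.Eventually.of_forall fun t _ y hy => ?_
      have h1 : Real.exp (-(y ^ 2 * (1 + t ^ 2))) ≤ 1 := by
        apply Real.exp_le_one_iff.2
        have : (0:ℝ) ≤ y ^ 2 * (1 + t ^ 2) := by positivity
        linarith
      have h2 : |y| ≤ |x| + 1 := by
        have h3 : |y - x| < 1 := mem_ball_iff_norm.1 hy
        calc |y| = |x + (y - x)| := by ring_nf
        _ ≤ |x| + |y - x| := abs_add_le _ _
        _ ≤ |x| + 1 := by linarith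
      have hnorm : ‖F' y t‖ = 2 * |y| * Real.exp (-(y ^ 2 * (1 + t ^ 2))) := by
        simp only [hF', Real.norm_eq_abs, abs_mul, abs_neg,
          abs_of_nonneg (Real.exp_pos _).le]
        norm_num
      rw [hnorm]
      calc 2 * |y| * Real.exp (-(y ^ 2 * (1 + t ^ 2))) ≤ 2 * (|x| + 1) * 1 :=
            mul_le_mul (by linarith) h1 (Real.exp_pos _).le (by positivity)
      _ = 2 * (|x| + 1) := by ring
    · exact intervalIntegrable_const
    · refine Filter.Eventually.of_forall fun t _ y _ => ?_
      have hu : HasDerivAt (fun y : ℝ => -(y ^ 2 * (1 + t ^ 2)))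
          (-(2 * y * (1 + t ^ 2))) y := by
        have := ((hasDerivAt_pow 2 y).mul_const (1 + t ^ 2)).neg
        simpa [Pi.neg_def, mul_comm, mul_assoc, mul_left_comm] using this
      have hd := (hu.exp).div_const (1 + t ^ 2)
      convert hd using 1
      show -(2 * y) * Real.exp (-(y ^ 2 * (1 + t ^ 2))) =
        Real.exp (-(y ^ 2 * (1 + t ^ 2))) * -(2 * y * (1 + t ^ 2)) / (1 + t ^ 2)
      have := (hden t).ne'
      rw [eq_div_iff this]
      ring
      rfl
  have hQ : Qfun = fun y => ∫ t in (0:ℝ)..1, F y t := rfl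
  rw [hQ]
  convert key using 1
  have hcomp : (∫ t in (0:ℝ)..1, F' x t) =
      (-(2 * x) * Real.exp (-x ^ 2)) * ∫ t in (0:ℝ)..1, Real.exp (-(x * t) ^ 2) := by
    rw [← intervalIntegral.integral_const_mul]
    apply intervalIntegral.integral_congr
    intro t _
    show -(2 * x) * Real.exp (-(x ^ 2 * (1 + t ^ 2))) =
      -(2 * x) * Real.exp (-x ^ 2) * Real.exp (-(x * t) ^ 2)
    rw [mul_assoc, ← Real.exp_add]
    ring_nf
  rw [hcomp]
  have h2 := int_aux x
  linear_combination 2 * Real.exp (-x ^ 2) * h2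

lemma Q_zero : Qfun 0 = Real.pi / 4 := by
  have : Qfun 0 = ∫ t in (0:ℝ)..1, 1 / (1 + t ^ 2) := by
    apply intervalIntegral.integral_congr
    intro t _
    simp [Qfun]
  rw [Qfun] at this
  rw [Qfun, this, integral_one_div_one_add_sq]
  simp [Real.arctan_one]

lemma erf_sq_identity (x : ℝ) : erf x ^ 2 = 1 - 4 / Real.pi * Qfun x := by
  have hπ : Real.sqrt Real.pi ≠ 0 := by positivity
  have hπ' : Real.pi ≠ 0 := Real.pi_ne_zero
  set Φ : ℝ → ℝ := fun x => erf x ^ 2 + 4 / Real.pi * Qfun x with hΦ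
  have hd : ∀ y : ℝ, HasDerivAt Φ 0 y := by
    intro y
    have h1 : HasDerivAt (fun x => erf x ^ 2)
        (2 * erf y ^ 1 * (2 / Real.sqrt Real.pi * Real.exp (-y ^ 2))) y :=
      (erf_hasDerivAt y).pow 2
    have h2 : HasDerivAt (fun x => 4 / Real.pi * Qfun x)
        (4 / Real.pi * (-(Real.sqrt Real.pi) * Real.exp (-y ^ 2) * erf y)) y :=
      (Q_hasDerivAt y).const_mul _
    have hsq : Real.sqrt Real.pi * Real.sqrt Real.pi = Real.pi :=
      Real.mul_self_sqrt Real.pi_pos.le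
    have hcoef : 2 * erf y ^ 1 * (2 / Real.sqrt Real.pi * Real.exp (-y ^ 2)) +
        4 / Real.pi * (-(Real.sqrt Real.pi) * Real.exp (-y ^ 2) * erf y) = 0 := by
      field_simp
      linear_combination (-4 * erf y * Real.exp (-y ^ 2)) * hsq
    have := h1.add h2
    rw [hcoef] at this
    exact this
  have hconst : Φ x = Φ 0 :=
    is_const_of_deriv_eq_zero (fun y => (hd y).differentiableAt)
      (fun y => (hd y).deriv) x 0
  have h0 : Φ 0 = 1 := by
    rw [hΦ]
    simp only [erf_zero, Q_zero]
    field_simp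
    norm_num
  have := hconst.trans h0
  rw [hΦ] at this
  linarith [this]

lemma Q_lower (x : ℝ) : Real.pi / 4 * Real.exp (-(4 / Real.pi) * x ^ 2) ≤ Qfun x := by
  set c : ℝ := 4 / Real.pi * x ^ 2 with hc
  have hπ : (0:ℝ) < Real.pi := Real.pi_pos
  have hden : ∀ t : ℝ, (0:ℝ) < 1 + t ^ 2 := fun t => by positivity
  have hmono : ∀ t ∈ Set.Icc (0:ℝ) 1,
      Real.exp (-c) * ((1 + c) / (1 + t ^ 2) - x ^ 2) ≤
        Real.exp (-(x ^ 2 * (1 + t ^ 2))) / (1 + t ^ 2) := by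
    intro t _
    have key : 1 + (c - x ^ 2 * (1 + t ^ 2)) ≤ Real.exp (c - x ^ 2 * (1 + t ^ 2)) := by
      have := Real.add_one_le_exp (c - x ^ 2 * (1 + t ^ 2))
      linarith
    have h2 : Real.exp (-c) * (1 + c - x ^ 2 * (1 + t ^ 2)) ≤
        Real.exp (-(x ^ 2 * (1 + t ^ 2))) := by
      have h3 := mul_le_mul_of_nonneg_left key (Real.exp_pos (-c)).le
      rw [← Real.exp_add] at h3
      have : -c + (c - x ^ 2 * (1 + t ^ 2)) = -(x ^ 2 * (1 + t ^ 2)) := by ring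
      rw [this] at h3
      linarith [h3]
    calc Real.exp (-c) * ((1 + c) / (1 + t ^ 2) - x ^ 2)
        = Real.exp (-c) * (1 + c - x ^ 2 * (1 + t ^ 2)) / (1 + t ^ 2) := by
          field_simp
      _ ≤ Real.exp (-(x ^ 2 * (1 + t ^ 2))) / (1 + t ^ 2) := by gcongr
  have hle : ∫ t in (0:ℝ)..1, Real.exp (-c) * ((1 + c) / (1 + t ^ 2) - x ^ 2) ≤
      ∫ t in (0:ℝ)..1, Real.exp (-(x ^ 2 * (1 + t ^ 2))) / (1 + t ^ 2) := by
    apply intervalIntegral.integral_mono_on (by norm_num)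
    · apply Continuous.intervalIntegrable
      apply Continuous.mul continuous_const
      apply Continuous.sub _ continuous_const
      exact Continuous.div continuous_const (by continuity) (fun t => (hden t).ne')
    · apply Continuous.intervalIntegrable
      exact Continuous.div (by continuity) (by continuity) (fun t => (hden t).ne')
    · exact hmono
  have hcomp : ∫ t in (0:ℝ)..1, Real.exp (-c) * ((1 + c) / (1 + t ^ 2) - x ^ 2) =
      Real.pi / 4 * Real.exp (-c) := by
    have hint1 : IntervalIntegrable
        (fun t : ℝ => (Real.exp (-c) * (1 + c)) * (1 / (1 + t ^ 2))) volume 0 1 := by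
      apply Continuous.intervalIntegrable
      exact Continuous.mul continuous_const
        (Continuous.div continuous_const (by continuity) (fun t => (hden t).ne'))
    have h1 : (∫ t in (0:ℝ)..1, Real.exp (-c) * ((1 + c) / (1 + t ^ 2) - x ^ 2)) =
        (∫ t in (0:ℝ)..1, (Real.exp (-c) * (1 + c)) * (1 / (1 + t ^ 2))) -
          ∫ t in (0:ℝ)..1, (Real.exp (-c) * x ^ 2 : ℝ) := by
      rw [← intervalIntegral.integral_sub hint1 intervalIntegrable_const]
      apply intervalIntegral.integral_congr
      intro t _
      have := (hden t).ne'
      field_simp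
    rw [h1, intervalIntegral.integral_const_mul, integral_one_div_one_add_sq,
      intervalIntegral.integral_const]
    simp only [Real.arctan_one, Real.arctan_zero, sub_zero, smul_eq_mul]
    rw [hc]
    field_simp
    ring
  calc Real.pi / 4 * Real.exp (-(4 / Real.pi) * x ^ 2)
      = ∫ t in (0:ℝ)..1, Real.exp (-c) * ((1 + c) / (1 + t ^ 2) - x ^ 2) := by
        rw [hcomp, hc]; ring_nf
    _ ≤ Qfun x := hle

lemma erf_sq_le (x : ℝ) : erf x ^ 2 ≤ 1 - Real.exp (-(4 / Real.pi) * x ^ 2) := by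
  have h1 := Q_lower x
  have h2 := erf_sq_identity x
  have hπ : (0:ℝ) < Real.pi := Real.pi_pos
  have h3 : 4 / Real.pi * (Real.pi / 4 * Real.exp (-(4 / Real.pi) * x ^ 2)) =
      Real.exp (-(4 / Real.pi) * x ^ 2) := by field_simp
  have h4 : 4 / Real.pi * (Real.pi / 4 * Real.exp (-(4 / Real.pi) * x ^ 2)) ≤
      4 / Real.pi * Qfun x := by
    apply mul_le_mul_of_nonneg_left h1 (by positivity)
  rw [h3] at h4
  linarith

lemma erf_sq_le' (x m : ℝ) (hx : x ^ 2 ≤ m ^ 2) :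
    erf x ^ 2 ≤ 1 - Real.exp (-(4 / Real.pi) * m ^ 2) := by
  refine (erf_sq_le x).trans ?_
  have hπ : (0:ℝ) < Real.pi := Real.pi_pos
  have : -(4 / Real.pi) * m ^ 2 ≤ -(4 / Real.pi) * x ^ 2 := by
    have h4 : (0:ℝ) < 4 / Real.pi := by positivity
    nlinarith
  linarith [Real.exp_le_exp.2 this]

lemma sum_exp_lower {K : ℕ} (hK : 0 < K) (c : ℝ) (t : Fin K → ℝ) :
    (K : ℝ) * Real.exp (-c * (∑ k, t k) / K) ≤ ∑ k, Real.exp (-c * t k) := by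
  set S : ℝ := ∑ k, t k with hS
  have hKpos : (0:ℝ) < K := by exact_mod_cast hK
  have hpt : ∀ k : Fin K, Real.exp (-c * S / K) * (1 + (-c * t k - (-c * S / K))) ≤
      Real.exp (-c * t k) := by
    intro k
    have key := Real.add_one_le_exp (-c * t k - (-c * S / K))
    have := mul_le_mul_of_nonneg_left key (Real.exp_pos (-c * S / K)).le
    rw [← Real.exp_add] at this
    have heq : -c * S / K + (-c * t k - -c * S / K) = -c * t k := by ring
    rw [heq] at this
    calc Real.exp (-c * S / K) * (1 + (-c * t k - (-c * S / K)))
        = Real.exp (-c * S / K) * ((-c * t k - -c * S / K) + 1) := by ring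
      _ ≤ Real.exp (-c * t k) := this
  have hsum : ∑ k : Fin K, Real.exp (-c * S / K) * (1 + (-c * t k - (-c * S / K))) ≤
      ∑ k : Fin K, Real.exp (-c * t k) := Finset.sum_le_sum (fun k _ => hpt k)
  refine le_trans ?_ hsum
  rw [← Finset.mul_sum]
  have hsum2 : ∑ k : Fin K, (1 + (-c * t k - (-c * S / K))) = (K : ℝ) := by
    rw [Finset.sum_add_distrib, Finset.sum_sub_distrib]
    simp only [Finset.sum_const, Finset.card_univ, Fintype.card_fin, nsmul_eq_mul, mul_one]
    rw [← Finset.mul_sum, ← hS]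
    field_simp
    ring
  rw [hsum2, mul_comm]


/-- If `Σ_k a_k² ≤ 2 C_X / K`, `Σ_k m_k² ≤ C'`, and `s_k² ≥ 0`, then
`|Σ_k a_k erf(m_k / √(1 + 2 s_k²))| ≤ (2 C_X)^{1/2} (1 − exp(−(4/π) C' / K))^{1/2}`;
in particular (for fixed `C_X, C'`) this bound tends to `0` as `K → ∞`. -/
theorem abs_sum_mul_erf_le (K D : ℕ) (hK : 0 < K) (hD : 0 < D)
    (CX C' : ℝ) (hCX : 0 ≤ CX) (hC' : 0 ≤ C')
    (a m s2 : Fin K → ℝ) (hs2 : ∀ k, 0 ≤ s2 k)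
    (ha : ∑ k, a k ^ 2 ≤ 2 * CX / (K : ℝ)) (hm : ∑ k, m k ^ 2 ≤ C') :
    |∑ k, a k * erf (m k / Real.sqrt (1 + 2 * s2 k))| ≤
      (2 * CX) ^ ((1 : ℝ) / 2) *
        (1 - Real.exp (-(4 / Real.pi) * C' / (K : ℝ))) ^ ((1 : ℝ) / 2) ∧
    Filter.Tendsto
      (fun K : ℕ => (2 * CX) ^ ((1 : ℝ) / 2) *
        (1 - Real.exp (-(4 / Real.pi) * C' / (K : ℝ))) ^ ((1 : ℝ) / 2))
      Filter.atTop (nhds 0) := by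
  have hπ : (0:ℝ) < Real.pi := Real.pi_pos
  constructor
  · have hKpos : (0:ℝ) < K := by exact_mod_cast hK
    set E : ℝ := Real.exp (-(4 / Real.pi) * C' / K) with hE
    have hE1 : E ≤ 1 := by
      rw [hE]
      apply Real.exp_le_one_iff.2
      have h0 : -(4 / Real.pi) * C' / (K:ℝ) = -(4 / Real.pi * C' / K) := by ring
      have : (0:ℝ) ≤ 4 / Real.pi * C' / K := by positivity
      rw [h0]
      linarith
    set e : Fin K → ℝ := fun k => erf (m k / Real.sqrt (1 + 2 * s2 k)) with he
    have hx2 : ∀ k, (m k / Real.sqrt (1 + 2 * s2 k)) ^ 2 ≤ m k ^ 2 := by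
      intro k
      have h1 : (1:ℝ) ≤ 1 + 2 * s2 k := by linarith [hs2 k]
      rw [div_pow, Real.sq_sqrt (by linarith [hs2 k] : (0:ℝ) ≤ 1 + 2 * s2 k)]
      exact div_le_self (sq_nonneg _) h1
    have herf : ∀ k, e k ^ 2 ≤ 1 - Real.exp (-(4 / Real.pi) * m k ^ 2) :=
      fun k => erf_sq_le' _ _ (hx2 k)
    have hsum1 : ∑ k, e k ^ 2 ≤ (K : ℝ) * (1 - E) := by
      have hlow := sum_exp_lower hK (4 / Real.pi) (fun k => m k ^ 2)
      have hmono : Real.exp (-(4 / Real.pi) * C' / K) ≤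
          Real.exp (-(4 / Real.pi) * (∑ k, m k ^ 2) / K) := by
        apply Real.exp_le_exp.2
        have h4 : (0:ℝ) < 4 / Real.pi := by positivity
        rw [div_le_div_iff_of_pos_right hKpos] -- maybe wrong name
        nlinarith
      calc ∑ k, e k ^ 2 ≤ ∑ k, (1 - Real.exp (-(4 / Real.pi) * m k ^ 2)) :=
            Finset.sum_le_sum fun k _ => herf k
        _ = (K : ℝ) - ∑ k, Real.exp (-(4 / Real.pi) * m k ^ 2) := by
            rw [Finset.sum_sub_distrib]
            simp
        _ ≤ (K : ℝ) - (K : ℝ) * Real.exp (-(4 / Real.pi) * (∑ k, m k ^ 2) / K) := by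
            linarith [hlow]
        _ ≤ (K : ℝ) - (K : ℝ) * E := by
            rw [hE]
            nlinarith [hmono]
        _ = (K : ℝ) * (1 - E) := by ring
    have hCS := Finset.sum_mul_sq_le_sq_mul_sq Finset.univ a e
    have he2nonneg : (0:ℝ) ≤ ∑ k, e k ^ 2 := Finset.sum_nonneg fun k _ => sq_nonneg _
    have hbound : (∑ k, a k * e k) ^ 2 ≤ 2 * CX * (1 - E) := by
      calc (∑ k, a k * e k) ^ 2 ≤ (∑ k, a k ^ 2) * ∑ k, e k ^ 2 := hCS
        _ ≤ (2 * CX / K) * ((K : ℝ) * (1 - E)) := by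
            apply mul_le_mul ha hsum1 he2nonneg (by positivity)
        _ = 2 * CX * (1 - E) := by field_simp
    have habs := Real.abs_le_sqrt hbound
    rw [Real.sqrt_mul (by positivity : (0:ℝ) ≤ 2 * CX)] at habs
    rw [Real.sqrt_eq_rpow, Real.sqrt_eq_rpow] at habs
    exact habs
  · have h1 : Filter.Tendsto (fun K : ℕ => -(4 / Real.pi) * C' / (K : ℝ))
        Filter.atTop (nhds 0) := tendsto_const_div_atTop_nhds_zero_nat _
    have h2 : Filter.Tendsto (fun K : ℕ => Real.exp (-(4 / Real.pi) * C' / (K : ℝ)))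
        Filter.atTop (nhds 1) := by
      have := (Real.continuous_exp.tendsto 0).comp h1
      simpa [Function.comp_def] using this
    have h3 : Filter.Tendsto (fun K : ℕ => 1 - Real.exp (-(4 / Real.pi) * C' / (K : ℝ)))
        Filter.atTop (nhds 0) := by
      have := (tendsto_const_nhds (x := (1:ℝ))).sub h2
      simpa using this
    have h4 : Filter.Tendsto
        (fun K : ℕ => (1 - Real.exp (-(4 / Real.pi) * C' / (K : ℝ))) ^ ((1:ℝ)/2))
        Filter.atTop (nhds 0) := by
      have hc := (Real.continuousAt_rpow_const 0 ((1:ℝ)/2) (Or.inr (by norm_num))).tendsto.comp h3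
      simpa [Function.comp_def, Real.zero_rpow (by norm_num : ((1:ℝ)/2) ≠ 0)] using hc
    have := h4.const_mul ((2 * CX) ^ ((1:ℝ)/2))
    simpa using this
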